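/- Let ℓ ≤ m, let A, B be m×ℓ real matrices such that AᵀA is invertible. Then det(BᵀB) ≥ det(BᵀA (AᵀA)⁻¹ AᵀB), with equality in the decomposition BᵀB = BᵀA(AᵀA)⁻¹AᵀB + Bᵀ(I − A(AᵀA)⁻¹Aᵀ)B where the second summand is positive semidefinite. -/

import Mathlib

open Matrix
open scoped MatrixOrder


variable {n : Type*} [Fintype n] [DecidableEq n]

lemma det_le_one_of_psd {M : Matrix n n ℝ} (hM : M.PosSemidef)
    (hsub : (1 - M).PosSemidef) : M.det ≤ 1 := by
  have herm := hM.1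
  rw [herm.det_eq_prod_eigenvalues]
  have key : ∀ i, (herm.eigenvalues i : ℝ) ≤ 1 := by
    intro i
    set v : n → ℝ := ⇑(herm.eigenvectorBasis i) with hv
    have hvne : v ≠ 0 := fun h => herm.eigenvectorBasis.orthonormal.ne_zero i (by ext j; simpa using congrFun h j)
    have hmv : M *ᵥ v = herm.eigenvalues i • v := herm.mulVec_eigenvectorBasis i
    have h0 := hsub.dotProduct_mulVec_nonneg v
    have hvv : 0 < v ⬝ᵥ v := by
      have := dotProduct_self_star_pos_iff (v := v).mpr hvne
      simpa using this
    rw [sub_mulVec, one_mulVec, hmv] at h0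
    simp only [star_trivial, dotProduct_sub, dotProduct_smul, smul_eq_mul] at h0
    nlinarith
  calc (∏ i, (herm.eigenvalues i : ℝ)) ≤ 1 := by
        apply Finset.prod_le_one
        · intro i _; exact_mod_cast hM.eigenvalues_nonneg i
        · intro i _; exact key i

lemma det_le_det_add_of_psd {X Y : Matrix n n ℝ} (hX : X.PosSemidef)
    (hY : Y.PosSemidef) : X.det ≤ (X + Y).det := by
  by_cases hdet : (X + Y).det = 0
  · rw [hdet]
    obtain ⟨v, hvne, hv⟩ := (Matrix.exists_mulVec_eq_zero_iff).mpr hdet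
    have h0 : v ⬝ᵥ ((X + Y) *ᵥ v) = 0 := by rw [hv, dotProduct_zero]
    rw [add_mulVec, dotProduct_add] at h0
    have hx0 := hX.dotProduct_mulVec_nonneg v
    have hy0 := hY.dotProduct_mulVec_nonneg v
    simp only [star_trivial] at hx0 hy0
    have hXv : X *ᵥ v = 0 := by
      have : (star v) ⬝ᵥ (X *ᵥ v) = 0 := by simp only [star_trivial]; linarith
      exact (hX.dotProduct_mulVec_zero_iff v).mp this
    have : X.det = 0 := Matrix.exists_mulVec_eq_zero_iff.mp ⟨v, hvne, hXv⟩
    exact this.le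
  · -- X + Y is positive definite
    have hS : (X + Y).PosSemidef := hX.add hY
    have hSpd : (X + Y).PosDef := by
      refine PosDef.of_dotProduct_mulVec_pos hS.1 (fun x hx => ?_)
      rcases lt_or_eq_of_le (hS.dotProduct_mulVec_nonneg x) with h | h
      · exact h
      · exfalso
        have := (hS.dotProduct_mulVec_zero_iff x).mp h.symm
        exact hdet (Matrix.exists_mulVec_eq_zero_iff.mp ⟨x, hx, this⟩)
    set R := CFC.sqrt (X + Y) with hRdef
    have hR : R.PosSemidef := (CFC.sqrt_nonneg (X + Y)).posSemidef
    have hRR : R * R = X + Y := CFC.sqrt_mul_sqrt_self (X + Y) hS.nonneg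
    have hdetR : IsUnit R.det := by
      have : R.det * R.det = (X + Y).det := by rw [← det_mul, hRR]
      exact isUnit_iff_ne_zero.mpr (fun h => hdet (by rw [← this, h, zero_mul]))
    have hRsymm : Rᵀ = R := by
      have := hR.1
      rwa [IsHermitian, conjTranspose_eq_transpose_of_trivial] at this
    have hRisymm : (R⁻¹)ᵀ = R⁻¹ := by rw [transpose_nonsing_inv, hRsymm]
    set M := R⁻¹ * X * R⁻¹ with hMdef
    have hM : M.PosSemidef := by
      have := hX.conjTranspose_mul_mul_same R⁻¹
      rwa [conjTranspose_eq_transpose_of_trivial, hRisymm] at this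
    have hsub : (1 - M).PosSemidef := by
      refine PosSemidef.of_dotProduct_mulVec_nonneg ?_ (fun x => ?_)
      · exact (isHermitian_one.sub hM.1)
      · set w := R⁻¹ *ᵥ x with hwdef
        have hxw : x = R *ᵥ w := by
          rw [hwdef, mulVec_mulVec, mul_nonsing_inv _ hdetR, one_mulVec]
        have h1 : x ⬝ᵥ (M *ᵥ x) = w ⬝ᵥ (X *ᵥ w) := by
          rw [hMdef, ← mulVec_mulVec, ← mulVec_mulVec, dotProduct_mulVec x R⁻¹,
            ← mulVec_transpose, hRisymm]
        have h2 : x ⬝ᵥ x = w ⬝ᵥ ((X + Y) *ᵥ w) := by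
          conv_lhs => rw [hxw]
          rw [dotProduct_mulVec, ← mulVec_transpose, hRsymm, mulVec_mulVec, hRR]
          exact dotProduct_comm _ _
        have hy := hY.dotProduct_mulVec_nonneg w
        simp only [star_trivial] at hy
        simp only [star_trivial, sub_mulVec, one_mulVec, dotProduct_sub, h1, h2,
          add_mulVec, dotProduct_add]
        linarith
    have hdetM : M.det ≤ 1 := det_le_one_of_psd hM hsub
    have hXeq : X = R * M * R := by
      rw [hMdef]
      rw [show R * (R⁻¹ * X * R⁻¹) * R = (R * R⁻¹) * X * (R⁻¹ * R) by noncomm_ring]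
      rw [mul_nonsing_inv _ hdetR, nonsing_inv_mul _ hdetR, one_mul, mul_one]
    have hdetS : 0 < (X + Y).det := hSpd.det_pos
    have hinv : R.det * R⁻¹.det = 1 := by
      rw [← det_mul, mul_nonsing_inv _ hdetR, det_one]
    have hMd : M.det = R⁻¹.det * X.det * R⁻¹.det := by
      rw [hMdef, det_mul, det_mul]
    calc X.det = (X + Y).det * M.det := by
          rw [← hRR, det_mul, hMd]
          linear_combination (-(X.det) * (R.det * R⁻¹.det + 1)) * hinv
      _ ≤ (X + Y).det * 1 := by
          exact mul_le_mul_of_nonneg_left hdetM hdetS.le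
      _ = (X + Y).det := mul_one _


theorem det_BtB_ge_det_projection {ℓ m : ℕ} (hlm : ℓ ≤ m)
    (A B : Matrix (Fin m) (Fin ℓ) ℝ) (hA : IsUnit (Aᵀ * A).det) :
    (Bᵀ * B).det ≥ (Bᵀ * A * (Aᵀ * A)⁻¹ * Aᵀ * B).det
    ∧ Bᵀ * B = Bᵀ * A * (Aᵀ * A)⁻¹ * Aᵀ * B
        + Bᵀ * (1 - A * (Aᵀ * A)⁻¹ * Aᵀ) * B
    ∧ (Bᵀ * (1 - A * (Aᵀ * A)⁻¹ * Aᵀ) * B).PosSemidef := by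
  set C := (Aᵀ * A)⁻¹ with hCdef
  have hCA : C * (Aᵀ * A) = 1 := nonsing_inv_mul _ hA
  have hAC : (Aᵀ * A) * C = 1 := mul_nonsing_inv _ hA
  have hCsymm : Cᵀ = C := by
    rw [hCdef, transpose_nonsing_inv, transpose_mul, transpose_transpose]
  set P := A * C * Aᵀ with hPdef
  have hPsymm : Pᵀ = P := by
    rw [hPdef, transpose_mul, transpose_mul, transpose_transpose, hCsymm, Matrix.mul_assoc]
  have hPP : P * P = P := by
    rw [hPdef]
    calc A * C * Aᵀ * (A * C * Aᵀ) = A * (C * (Aᵀ * A)) * (C * Aᵀ) := by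
          simp only [Matrix.mul_assoc]
      _ = A * C * Aᵀ := by rw [hCA, Matrix.mul_one, Matrix.mul_assoc]
  have hQsymm : (1 - P)ᵀ = 1 - P := by rw [transpose_sub, transpose_one, hPsymm]
  have hQQ : (1 - P) * (1 - P) = 1 - P := by
    rw [Matrix.sub_mul, Matrix.one_mul, Matrix.mul_sub, Matrix.mul_one, hPP]
    abel
  -- PSD of BᵀPB and Bᵀ(1-P)B
  have hXpsd : (Bᵀ * P * B).PosSemidef := by
    have h := posSemidef_conjTranspose_mul_self (P * B)
    rwa [conjTranspose_eq_transpose_of_trivial, transpose_mul, hPsymm,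
      show Bᵀ * P * (P * B) = Bᵀ * (P * P) * B by simp only [Matrix.mul_assoc], hPP] at h
  have hYpsd : (Bᵀ * (1 - P) * B).PosSemidef := by
    have h := posSemidef_conjTranspose_mul_self ((1 - P) * B)
    rwa [conjTranspose_eq_transpose_of_trivial, transpose_mul, hQsymm,
      show Bᵀ * (1 - P) * ((1 - P) * B) = Bᵀ * ((1 - P) * (1 - P)) * B by
        simp only [Matrix.mul_assoc],
      hQQ] at h
  have hXeq : Bᵀ * A * C * Aᵀ * B = Bᵀ * P * B := by rw [hPdef]; simp only [Matrix.mul_assoc]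
  have hdecomp : Bᵀ * B = Bᵀ * A * C * Aᵀ * B + Bᵀ * (1 - P) * B := by
    rw [hXeq, Matrix.mul_sub, Matrix.mul_one, Matrix.sub_mul]
    abel
  refine ⟨?_, hdecomp, hYpsd⟩
  rw [hdecomp, hXeq]
  exact det_le_det_add_of_psd hXpsd hYpsd
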